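/- Under the kernel hypotheses on G and the hypotheses on g and σ, there is a constant K, depending only on n, K₀, λ, L and T, such that for every S ∈ [0,T), every θ, θ̂ ∈ Y[S,T], every (t,s) ∈ Δ̂[S,T] and every ξ, x ∈ ℝ^n: |S[θ](t,s,ξ,x) − S[θ̂](t,s,ξ,x)| ≤ K ∫_s^T sup_{ξ',x'∈ℝ^n} |θ_x(t,τ,ξ',x') − θ̂_x(t,τ,ξ',x')| dτ + K (T−s)^{1/2} sup_{(t',τ)∈Δ̂[S,T], ξ',x'∈ℝ^n} |θ(t',τ,ξ',x') − θ̂(t',τ,ξ',x')|. -/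

import Mathlib

open scoped ENNReal NNReal BigOperators
open Set

noncomputable section

abbrev En (n : ℕ) : Type := EuclideanSpace ℝ (Fin n)

def sing (n : ℕ) (i : Fin n) : En n := EuclideanSpace.single i (1 : ℝ)

variable {n m : ℕ}

/-- sup norm `|φ|⁽⁰⁾` over `[S,T] × ℝⁿ`. -/
def nrm0 {V : Type*} [NormedAddCommGroup V] (S T : ℝ) (φ : ℝ → En n → V) : ℝ≥0∞ :=
  ⨆ (s : Icc S T) (x : En n), (‖φ s.1 x‖₊ : ℝ≥0∞)

/-- time Hölder seminorm `⟨φ⟩ₛ^(β)` over `[S,T] × ℝⁿ`. -/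
def hS {V : Type*} [NormedAddCommGroup V] (S T β : ℝ) (φ : ℝ → En n → V) : ℝ≥0∞ :=
  ⨆ (s : Icc S T) (s' : Icc S T) (x : En n),
    (‖φ s.1 x - φ s'.1 x‖₊ : ℝ≥0∞) / ENNReal.ofReal (|s.1 - s'.1| ^ β)

/-- space Hölder seminorm `⟨φ⟩ₓ^(α)` over `[S,T] × ℝⁿ`. -/
def hX {V : Type*} [NormedAddCommGroup V] (S T α : ℝ) (φ : ℝ → En n → V) : ℝ≥0∞ :=
  ⨆ (s : Icc S T) (x : En n) (x' : En n) (_ : dist x x' ≤ 1),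
    (‖φ s.1 x - φ s.1 x'‖₊ : ℝ≥0∞) / ENNReal.ofReal (dist x x' ^ α)

/-- `⟨φ⟩^(α) = ⟨φ⟩ₛ^(α/2) + ⟨φ⟩ₓ^(α)`. -/
def hol {V : Type*} [NormedAddCommGroup V] (S T α : ℝ) (φ : ℝ → En n → V) : ℝ≥0∞ :=
  hS S T (α/2) φ + hX S T α φ

/-- `|φ|^(α)`. -/
def nrmA {V : Type*} [NormedAddCommGroup V] (S T α : ℝ) (φ : ℝ → En n → V) : ℝ≥0∞ :=
  nrm0 S T φ + hol S T α φ

/-- spatial gradient. -/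
def Dx {V : Type*} [NormedAddCommGroup V] [NormedSpace ℝ V] (φ : ℝ → En n → V) :
    ℝ → En n → (En n →L[ℝ] V) := fun s x => fderiv ℝ (φ s) x

/-- spatial Hessian. -/
def Dxx {V : Type*} [NormedAddCommGroup V] [NormedSpace ℝ V] (φ : ℝ → En n → V) :
    ℝ → En n → (En n →L[ℝ] (En n →L[ℝ] V)) :=
  fun s x => fderiv ℝ (fun y => fderiv ℝ (φ s) y) x

/-- time derivative. -/
def Dt {V : Type*} [NormedAddCommGroup V] [NormedSpace ℝ V] (φ : ℝ → En n → V) :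
    ℝ → En n → V := fun s x => deriv (fun r => φ r x) s

/-- `|φ|^(1+α)`. -/
def nrm1A {V : Type*} [NormedAddCommGroup V] [NormedSpace ℝ V] (S T α : ℝ)
    (φ : ℝ → En n → V) : ℝ≥0∞ :=
  nrm0 S T φ + nrm0 S T (Dx φ) + hol S T α (Dx φ) + hS S T ((1+α)/2) φ

/-- `|φ|^(2+α)`. -/
def nrm2A {V : Type*} [NormedAddCommGroup V] [NormedSpace ℝ V] (S T α : ℝ)
    (φ : ℝ → En n → V) : ℝ≥0∞ :=
  nrm0 S T φ + nrm0 S T (Dx φ) + nrm0 S T (Dt φ) + nrm0 S T (Dxx φ)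
    + hol S T α (Dt φ) + hol S T α (Dxx φ) + hS S T ((1+α)/2) (Dx φ)

/-- sup norm over `ℝⁿ` (time–independent functions). -/
def xnrm0 {V : Type*} [NormedAddCommGroup V] (h : En n → V) : ℝ≥0∞ :=
  ⨆ x : En n, (‖h x‖₊ : ℝ≥0∞)

/-- Hölder seminorm over `ℝⁿ`. -/
def xhol {V : Type*} [NormedAddCommGroup V] (α : ℝ) (h : En n → V) : ℝ≥0∞ :=
  ⨆ (x : En n) (x' : En n) (_ : dist x x' ≤ 1),
    (‖h x - h x'‖₊ : ℝ≥0∞) / ENNReal.ofReal (dist x x' ^ α)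

/-- `|h|^(1+α)` on `ℝⁿ`. -/
def xnrm1A {V : Type*} [NormedAddCommGroup V] [NormedSpace ℝ V] (α : ℝ)
    (h : En n → V) : ℝ≥0∞ :=
  xnrm0 h + xnrm0 (fderiv ℝ h) + xhol α (fderiv ℝ h)

/-- `|h|^(2+α)` on `ℝⁿ`. -/
def xnrm2A {V : Type*} [NormedAddCommGroup V] [NormedSpace ℝ V] (α : ℝ)
    (h : En n → V) : ℝ≥0∞ :=
  xnrm0 h + xnrm0 (fderiv ℝ h) + xnrm0 (fderiv ℝ (fderiv ℝ h))
    + xhol α (fderiv ℝ (fderiv ℝ h))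

/-- uniform parabolicity (P1). -/
def P1 (n : ℕ) (T lam0 : ℝ) (a : ℝ → En n → Fin n → Fin n → ℝ) : Prop :=
  ∀ s ∈ Icc (0:ℝ) T, ∀ x ζ : En n,
    lam0 * ‖ζ‖^2 ≤ ∑ i, ∑ j, a s x i j * ζ i * ζ j

/-- regularity of the coefficients (P2). -/
def P2 (n : ℕ) (T α K0 : ℝ) (a : ℝ → En n → Fin n → Fin n → ℝ)
    (b : ℝ → En n → Fin n → ℝ) : Prop :=
  (∀ i j, ContinuousOn (fun p : ℝ × En n => a p.1 p.2 i j) (Icc 0 T ×ˢ univ)) ∧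
  (∀ i, ContinuousOn (fun p : ℝ × En n => b p.1 p.2 i) (Icc 0 T ×ˢ univ)) ∧
  (∃ C : ℝ, ∀ s ∈ Icc (0:ℝ) T, ∀ x : En n,
      (∀ i j, |a s x i j| ≤ C) ∧ (∀ i, |b s x i| ≤ C)) ∧
  (∀ i j, ∀ s ∈ Icc (0:ℝ) T, ∀ s' ∈ Icc (0:ℝ) T, ∀ x x' : En n,
      |a s x i j - a s' x' i j| ≤ K0 * (|s - s'| ^ (α/2) + ‖x - x'‖ ^ α)) ∧
  (∀ i, ∀ s ∈ Icc (0:ℝ) T, ∀ x x' : En n,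
      |b s x i - b s x' i| ≤ K0 * ‖x - x'‖ ^ α)

/-- bounded classical solution of the backward Cauchy problem (★) on `[S,T] × ℝⁿ`. -/
def IsClassicalSol (n : ℕ) (S T : ℝ) (a : ℝ → En n → Fin n → Fin n → ℝ)
    (b : ℝ → En n → Fin n → ℝ) (f : ℝ → En n → ℝ) (h : En n → ℝ)
    (v : ℝ → En n → ℝ) : Prop :=
  (∃ C : ℝ, ∀ s ∈ Icc S T, ∀ x : En n, |v s x| ≤ C) ∧
  ContinuousOn (fun p : ℝ × En n => v p.1 p.2) (Icc S T ×ˢ univ) ∧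
  (∀ x : En n, ∀ s ∈ Icc S T, DifferentiableAt ℝ (fun r => v r x) s) ∧
  (∀ s ∈ Icc S T, ContDiff ℝ 2 (v s)) ∧
  (∀ s ∈ Icc S T, ∀ x : En n,
    Dt v s x + (∑ i, ∑ j, a s x i j * Dxx v s x (sing n i) (sing n j))
      + (∑ i, b s x i * Dx v s x (sing n i)) + f s x = 0) ∧
  (∀ x : En n, v T x = h x)


/-- the `Y[S,T]`-norm (with exponent `p`). -/
def Ynrm (n m : ℕ) (S T p : ℝ) (θ : ℝ → ℝ → En n → En n → En m) : ℝ≥0∞ :=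
  (⨆ t : Icc (0:ℝ) T,
    (∫⁻ s in Ioc (max t.1 S) T,
        (⨆ (ξ : En n) (x : En n),
          (‖fderiv ℝ (fun y => θ t.1 s ξ y) x‖₊ : ℝ≥0∞)) ^ p) ^ (1/p))
  + ⨆ (t : Icc (0:ℝ) T) (s : Icc (max t.1 S) T) (ξ : En n) (x : En n),
      (‖θ t.1 s.1 ξ x‖₊ : ℝ≥0∞)

/-- membership in `Y[S,T]`. -/
def memY (n m : ℕ) (S T p : ℝ) (θ : ℝ → ℝ → En n → En n → En m) : Prop :=
  Measurable (fun q : ℝ × ℝ × En n × En n => θ q.1 q.2.1 q.2.2.1 q.2.2.2) ∧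
  (∀ t ∈ Icc (0:ℝ) T, ∀ s ∈ Icc (max t S) T, ∀ ξ x : En n,
    DifferentiableAt ℝ (fun y => θ t s ξ y) x) ∧
  Ynrm n m S T p θ ≠ ⊤

/-- hypotheses on the kernel `G`: measurability, differentiability in the second
(space) variable, and Gaussian bounds on `G` and its spatial gradient. -/
def KernelHyp (n : ℕ) (T K0 lam : ℝ) (G : ℝ → En n → ℝ → En n → ℝ) : Prop :=
  Measurable (fun q : ℝ × En n × ℝ × En n => G q.1 q.2.1 q.2.2.1 q.2.2.2) ∧
  (∀ (s : ℝ) (x : En n) (τ : ℝ) (η : En n), 0 ≤ s → s < τ → τ ≤ T →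
    DifferentiableAt ℝ (fun y => G s y τ η) x) ∧
  (∀ (s : ℝ) (x : En n) (τ : ℝ) (η : En n), 0 ≤ s → s < τ → τ ≤ T →
    |G s x τ η|
      ≤ K0 * (τ - s) ^ (-(n : ℝ)/2) * Real.exp (-lam * ‖η - x‖^2 / (τ - s))) ∧
  (∀ (s : ℝ) (x : En n) (τ : ℝ) (η : En n), 0 ≤ s → s < τ → τ ≤ T →
    ‖fderiv ℝ (fun y => G s y τ η) x‖
      ≤ K0 * (τ - s) ^ (-((n : ℝ) + 1)/2) * Real.exp (-lam * ‖η - x‖^2 / (τ - s)))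

/-- hypotheses on `g` and `σ`: measurability, boundedness by `L`, and Lipschitz
continuity of `g` in its last three arguments with constant `L`. -/
def GSHyp (n m d : ℕ) (L : ℝ)
    (g : ℝ → ℝ → En n → En n → En m → (En d →L[ℝ] En m) → (En d →L[ℝ] En m) → En m)
    (σ : ℝ → En n → (En d →L[ℝ] En n)) : Prop :=
  Measurable (fun q : ℝ × ℝ × En n × En n × En m ×
      (En d →L[ℝ] En m) × (En d →L[ℝ] En m) =>
    g q.1 q.2.1 q.2.2.1 q.2.2.2.1 q.2.2.2.2.1 q.2.2.2.2.2.1 q.2.2.2.2.2.2) ∧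
  (∀ (t s : ℝ) (ξ x : En n) (y : En m) (z ζ : En d →L[ℝ] En m),
    ‖g t s ξ x y z ζ‖ ≤ L) ∧
  (∀ (t s : ℝ) (ξ x : En n) (y y' : En m) (z z' ζ ζ' : En d →L[ℝ] En m),
    ‖g t s ξ x y z ζ - g t s ξ x y' z' ζ'‖
      ≤ L * (‖y - y'‖ + ‖z - z'‖ + ‖ζ - ζ'‖)) ∧
  Measurable (fun p : ℝ × En n => σ p.1 p.2) ∧
  (∀ (s : ℝ) (x : En n), ‖σ s x‖ ≤ L)

/-- the nonlinear integral operator `S` associated with the mild form of the coupled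
representation PDE system for Type-II BSVIEs. -/
def Smap (n m d : ℕ) (T : ℝ) (G : ℝ → En n → ℝ → En n → ℝ)
    (g : ℝ → ℝ → En n → En n → En m → (En d →L[ℝ] En m) → (En d →L[ℝ] En m) → En m)
    (σ : ℝ → En n → (En d →L[ℝ] En n))
    (θ : ℝ → ℝ → En n → En n → En m) : ℝ → ℝ → En n → En n → En m :=
  fun t s ξ x =>
    ∫ τ in Ioc s T, ∫ η : En n,
      G s x τ η •
        g t τ ξ η (θ τ τ η η)
          ((fderiv ℝ (fun y => θ t τ ξ y) η).comp (σ τ η))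
          ((∫ ηb : En n,
              (fderiv ℝ (fun ξ' => G t ξ' τ ηb) ξ).smulRight (θ τ τ ηb ηb)).comp
            (σ τ η))

open MeasureTheory Filter
open scoped Real

lemma euclid_sum (v : En n) : v = ∑ i, v i • sing n i := by
  ext j
  have : (∑ i, v i • sing n i) j = ∑ i, (v i • sing n i) j := by
    simp
  rw [this]; simp [sing, EuclideanSpace.single_apply]

lemma clm_decomp {V : Type*} [NormedAddCommGroup V] [NormedSpace ℝ V]
    (L : En n →L[ℝ] V) :
    L = ∑ i, (EuclideanSpace.proj (𝕜 := ℝ) i).smulRight (L (sing n i)) := by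
  ext v
  conv_lhs => rw [euclid_sum v]
  rw [map_sum]
  simp [ContinuousLinearMap.smulRight_apply, ContinuousLinearMap.sum_apply]

/-- parameterized measurability of the Fréchet derivative. -/
lemma aemeasurable_fderiv_param {α : Type*} [MeasurableSpace α] (μ : Measure α)
    {Sset : Set α} (hS : MeasurableSet Sset)
    {V : Type*} [NormedAddCommGroup V] [NormedSpace ℝ V] [MeasurableSpace V]
    [BorelSpace V] [SecondCountableTopology V] [CompleteSpace V]
    (F : α → En n → V) (pt : α → En n)
    (hF : Measurable (fun q : α × En n => F q.1 q.2)) (hpt : Measurable pt)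
    (hdiff : ∀ a ∈ Sset, DifferentiableAt ℝ (F a) (pt a)) :
    AEMeasurable (fun a => fderiv ℝ (F a) (pt a)) (μ.restrict Sset) := by
  have hcol : ∀ v : En n,
      AEMeasurable (fun a => fderiv ℝ (F a) (pt a) v) (μ.restrict Sset) := by
    intro v
    have hq : ∀ k : ℕ, Measurable fun a =>
        ((k : ℝ) + 1) • (F a (pt a + ((k : ℝ) + 1)⁻¹ • v) - F a (pt a)) := by
      intro k
      apply Measurable.const_smul
      exact ((hF.comp (measurable_id.prodMk
        (hpt.add_const (((k : ℝ) + 1)⁻¹ • v)))).sub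
        (hF.comp (measurable_id.prodMk hpt)))
    refine aemeasurable_of_tendsto_metrizable_ae atTop
      (fun k => (hq k).aemeasurable) ?_
    refine ae_restrict_of_forall_mem hS ?_
    intro a ha
    have hc0 : Tendsto (fun k : ℕ => (k : ℝ) + 1) atTop atTop :=
      tendsto_atTop_add_const_right _ 1 tendsto_natCast_atTop_atTop
    have hc : Tendsto (fun k : ℕ => ‖(k : ℝ) + 1‖) atTop atTop :=
      hc0.congr (fun k => (Real.norm_of_nonneg (by positivity)).symm)
    exact (hdiff a ha).hasFDerivAt.lim v hc
  have heq : (fun a => fderiv ℝ (F a) (pt a))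
      = fun a => ∑ i, (EuclideanSpace.proj (𝕜 := ℝ) i).smulRight
          (fderiv ℝ (F a) (pt a) (sing n i)) := by
    funext a; exact clm_decomp _
  rw [heq]
  refine Finset.aemeasurable_fun_sum _ (fun i _ => ?_)
  exact ((ContinuousLinearMap.smulRightL ℝ (En n) V
    (EuclideanSpace.proj i)).continuous.measurable).comp_aemeasurable (hcol _)

lemma gauss_integrable (c : ℝ) (hc : 0 < c) (x : En n) :
    Integrable (fun η : En n => Real.exp (-c * ‖η - x‖ ^ 2)) := by
  have h0 : Integrable (fun η : En n => Real.exp (-c * ‖η‖ ^ 2)) := by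
    have h := (GaussianFourier.integrable_cexp_neg_mul_sq_norm_add
      (V := En n) (b := (c : ℂ)) (by simpa using hc) 0 0).re
    refine h.congr (Eventually.of_forall fun v => ?_)
    simp [Complex.exp_ofReal_re, ← Complex.ofReal_pow, ← Complex.ofReal_neg,
      ← Complex.ofReal_mul, Complex.exp_ofReal_re]
  exact h0.comp_sub_right x

lemma gauss_integral (c : ℝ) (hc : 0 < c) (x : En n) :
    ∫ η : En n, Real.exp (-c * ‖η - x‖ ^ 2) = (π / c) ^ ((n : ℝ) / 2) := by
  rw [integral_sub_right_eq_self (fun η : En n => Real.exp (-c * ‖η‖ ^ 2)) x]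
  rw [GaussianFourier.integral_rexp_neg_mul_sq_norm hc]
  simp [finrank_euclideanSpace_fin]

lemma gaussR_eq (lam r : ℝ) (x : En n) :
    (fun η : En n => Real.exp (-lam * ‖η - x‖ ^ 2 / r))
      = fun η : En n => Real.exp (-(lam / r) * ‖η - x‖ ^ 2) := by
  funext η; congr 1; ring

lemma gaussR_integrable (lam r : ℝ) (hlam : 0 < lam) (hr : 0 < r) (x : En n) :
    Integrable (fun η : En n => Real.exp (-lam * ‖η - x‖ ^ 2 / r)) := by
  rw [gaussR_eq]; exact gauss_integrable _ (div_pos hlam hr) x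

lemma gaussR_integral (lam r : ℝ) (hlam : 0 < lam) (hr : 0 < r) (x : En n) :
    ∫ η : En n, Real.exp (-lam * ‖η - x‖ ^ 2 / r)
      = (π / lam) ^ ((n : ℝ) / 2) * r ^ ((n : ℝ) / 2) := by
  rw [gaussR_eq, gauss_integral _ (div_pos hlam hr) x]
  have h1 : π / (lam / r) = (π / lam) * r := by
    field_simp
  rw [h1, Real.mul_rpow (by positivity) hr.le]


lemma measurable_rpow_const' (r : ℝ) (hr : r ≠ 0) :
    Measurable fun y : ℝ => y ^ r := by
  have heq : (fun y : ℝ => y ^ r) = fun y : ℝ =>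
      if y = 0 then 0 else
        if y < 0 then Real.exp (Real.log y * r) * Real.cos (r * π)
        else Real.exp (Real.log y * r) := by
    funext y
    rcases lt_trichotomy y 0 with h | h | h
    · rw [if_neg h.ne, if_pos h, Real.rpow_def_of_neg h]
    · rw [h, if_pos rfl, Real.zero_rpow hr]
    · rw [if_neg h.ne', if_neg (not_lt.2 h.le), Real.rpow_def_of_pos h]
  rw [heq]
  refine Measurable.ite (measurableSet_eq) measurable_const ?_
  refine Measurable.ite (measurableSet_lt measurable_id measurable_const) ?_ ?_
  · exact ((Real.measurable_log.mul_const r).exp).mul_const _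
  · exact (Real.measurable_log.mul_const r).exp

set_option maxHeartbeats 2000000 in
lemma aux_int (n m d : ℕ) {T K0 lam L : ℝ} (hK0 : 0 < K0) (hlam : 0 < lam) (hL : 0 < L)
    (G : ℝ → En n → ℝ → En n → ℝ)
    (g : ℝ → ℝ → En n → En n → En m → (En d →L[ℝ] En m) → (En d →L[ℝ] En m) → En m)
    (σ : ℝ → En n → (En d →L[ℝ] En n))
    (hG : KernelHyp n T K0 lam G) (hgs : GSHyp n m d L g σ)
    {t s : ℝ} (ξ x : En n) (h0t : 0 ≤ t) (hts : t ≤ s)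
    (φ : ℝ → ℝ → En n → En n → En m)
    (hφmeas : Measurable (fun q : ℝ × ℝ × En n × En n => φ q.1 q.2.1 q.2.2.1 q.2.2.2))
    (hφdiff : ∀ τ ∈ Ioc s T, ∀ x' : En n, DifferentiableAt ℝ (fun y => φ t τ ξ y) x')
    (B : ℝ) (hB : ∀ τ ∈ Ioc s T, ∀ η : En n, ‖φ τ τ η η‖ ≤ B) :
    (∀ τ ∈ Ioc s T, Integrable (fun ηb : En n =>
        (fderiv ℝ (fun ξ' => G t ξ' τ ηb) ξ).smulRight (φ τ τ ηb ηb))) ∧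
    (∀ τ ∈ Ioc s T, Integrable (fun η : En n =>
        G s x τ η • g t τ ξ η (φ τ τ η η)
          ((fderiv ℝ (fun y => φ t τ ξ y) η).comp (σ τ η))
          ((∫ ηb : En n, (fderiv ℝ (fun ξ' => G t ξ' τ ηb) ξ).smulRight
              (φ τ τ ηb ηb)).comp (σ τ η)))) ∧
    Integrable (fun τ => ∫ η : En n,
        G s x τ η • g t τ ξ η (φ τ τ η η)
          ((fderiv ℝ (fun y => φ t τ ξ y) η).comp (σ τ η))
          ((∫ ηb : En n, (fderiv ℝ (fun ξ' => G t ξ' τ ηb) ξ).smulRight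
              (φ τ τ ηb ηb)).comp (σ τ η)))
      (volume.restrict (Ioc s T)) := by
  obtain ⟨hGmeas, hGdiff, hGbd, hGgrad⟩ := hG
  obtain ⟨hgmeas, hgbd, hglip, hσmeas, hσbd⟩ := hgs
  have h0s : 0 ≤ s := le_trans h0t hts
  have hsm : Continuous fun pq : (En n →L[ℝ] ℝ) × En m => pq.1.smulRight pq.2 :=
    isBoundedBilinearMap_smulRight.continuous
  have hcomp : Continuous fun pq : (En n →L[ℝ] En m) × (En d →L[ℝ] En n) =>
      pq.1.comp pq.2 := isBoundedBilinearMap_comp.continuous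
  have hZmeas : ∀ τ ∈ Ioc s T, AEMeasurable (fun ηb : En n =>
      (fderiv ℝ (fun ξ' => G t ξ' τ ηb) ξ).smulRight (φ τ τ ηb ηb)) volume := by
    intro τ hτ
    have htτ : t < τ := lt_of_le_of_lt hts hτ.1
    have hfd : AEMeasurable (fun ηb : En n =>
        fderiv ℝ (fun ξ' => G t ξ' τ ηb) ξ) volume := by
      have h := aemeasurable_fderiv_param (n := n) volume MeasurableSet.univ
        (fun ηb ξ' => G t ξ' τ ηb) (fun _ => ξ)
        (hGmeas.comp (measurable_const.prodMk (measurable_snd.prodMk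
          (measurable_const.prodMk measurable_fst))))
        measurable_const (fun a _ => hGdiff t ξ τ a h0t htτ hτ.2)
      rwa [Measure.restrict_univ] at h
    have hφd : Measurable fun ηb : En n => φ τ τ ηb ηb :=
      hφmeas.comp (measurable_const.prodMk (measurable_const.prodMk
        (measurable_id.prodMk measurable_id)))
    exact hsm.measurable.comp_aemeasurable (hfd.prodMk hφd.aemeasurable)
  have hZint : ∀ τ ∈ Ioc s T, Integrable (fun ηb : En n =>
      (fderiv ℝ (fun ξ' => G t ξ' τ ηb) ξ).smulRight (φ τ τ ηb ηb)) := by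
    intro τ hτ
    have htτ : t < τ := lt_of_le_of_lt hts hτ.1
    have hrt : 0 < τ - t := by linarith
    refine Integrable.mono' (g := fun ηb : En n =>
        K0 * (τ - t) ^ (-((n : ℝ) + 1) / 2) *
          Real.exp (-lam * ‖ηb - ξ‖ ^ 2 / (τ - t)) * B)
      (((gaussR_integrable lam (τ - t) hlam hrt ξ).const_mul _).mul_const B)
      ((hZmeas τ hτ).aestronglyMeasurable) ?_
    refine Eventually.of_forall fun ηb => ?_
    rw [ContinuousLinearMap.norm_smulRight_apply]
    exact mul_le_mul (hGgrad t ξ τ ηb h0t htτ hτ.2) (hB τ hτ ηb) (norm_nonneg _)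
      (by positivity)
  refine ⟨hZint, ?_, ?_⟩
  · intro τ hτ
    have hrs : 0 < τ - s := sub_pos.2 hτ.1
    have hG1 : Measurable fun η : En n => G s x τ η :=
      hGmeas.comp (measurable_const.prodMk (measurable_const.prodMk
        (measurable_const.prodMk measurable_id)))
    have hφd : Measurable fun η : En n => φ τ τ η η :=
      hφmeas.comp (measurable_const.prodMk (measurable_const.prodMk
        (measurable_id.prodMk measurable_id)))
    have hfd : Measurable fun η : En n => fderiv ℝ (fun y => φ t τ ξ y) η :=
      measurable_fderiv _ _
    have hσ1 : Measurable fun η : En n => σ τ η :=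
      hσmeas.comp (measurable_const.prodMk measurable_id)
    have hz : Measurable fun η : En n =>
        (fderiv ℝ (fun y => φ t τ ξ y) η).comp (σ τ η) :=
      hcomp.measurable.comp (hfd.prodMk hσ1)
    have hζ : Measurable fun η : En n =>
        ((∫ ηb : En n, (fderiv ℝ (fun ξ' => G t ξ' τ ηb) ξ).smulRight
          (φ τ τ ηb ηb)).comp (σ τ η)) :=
      hcomp.measurable.comp (measurable_const.prodMk hσ1)
    have hgc : Measurable fun η : En n => g t τ ξ η (φ τ τ η η)
        ((fderiv ℝ (fun y => φ t τ ξ y) η).comp (σ τ η))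
        ((∫ ηb : En n, (fderiv ℝ (fun ξ' => G t ξ' τ ηb) ξ).smulRight
          (φ τ τ ηb ηb)).comp (σ τ η)) :=
      hgmeas.comp (measurable_const.prodMk (measurable_const.prodMk
        (measurable_const.prodMk (measurable_id.prodMk (hφd.prodMk
          (hz.prodMk hζ))))))
    refine Integrable.mono' (g := fun η : En n =>
        K0 * (τ - s) ^ (-(n : ℝ) / 2) *
          Real.exp (-lam * ‖η - x‖ ^ 2 / (τ - s)) * L)
      (((gaussR_integrable lam (τ - s) hlam hrs x).const_mul _).mul_const L)
      ((hG1.smul hgc).aestronglyMeasurable) ?_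
    refine Eventually.of_forall fun η => ?_
    rw [norm_smul, Real.norm_eq_abs]
    exact mul_le_mul (hGbd s x τ η h0s hτ.1 hτ.2) (hgbd _ _ _ _ _ _ _)
      (norm_nonneg _) (by positivity)
  · have hIset : MeasurableSet (Ioc s T) := measurableSet_Ioc
    set μP : Measure (ℝ × En n) := (volume.restrict (Ioc s T)).prod volume with hμP
    have hμPr : μP = ((volume : Measure ℝ).prod volume).restrict (Ioc s T ×ˢ univ) := by
      rw [hμP, Measure.restrict_prod_eq_prod_univ]
    have jG : Measurable fun q : ℝ × En n => G s x q.1 q.2 :=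
      hGmeas.comp (measurable_const.prodMk (measurable_const.prodMk
        (measurable_fst.prodMk measurable_snd)))
    have jy : Measurable fun q : ℝ × En n => φ q.1 q.1 q.2 q.2 :=
      hφmeas.comp (measurable_fst.prodMk (measurable_fst.prodMk
        (measurable_snd.prodMk measurable_snd)))
    have jσ : Measurable fun q : ℝ × En n => σ q.1 q.2 := hσmeas
    have jfd : AEMeasurable (fun q : ℝ × En n =>
        fderiv ℝ (fun y => φ t q.1 ξ y) q.2) μP := by
      have h := aemeasurable_fderiv_param ((volume : Measure ℝ).prod volume)
        (hIset.prod MeasurableSet.univ)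
        (fun (q : ℝ × En n) => (fun y => φ t q.1 ξ y)) (fun q => q.2)
        (hφmeas.comp (measurable_const.prodMk
          ((measurable_fst.comp measurable_fst).prodMk
            (measurable_const.prodMk measurable_snd))))
        measurable_snd ?_
      · rwa [← hμPr] at h
      · rintro ⟨τ, η⟩ hq
        exact hφdiff τ hq.1 η
    have jfdG : AEMeasurable (fun q : ℝ × En n =>
        fderiv ℝ (fun ξ' => G t ξ' q.1 q.2) ξ) μP := by
      have h := aemeasurable_fderiv_param ((volume : Measure ℝ).prod volume)
        (hIset.prod MeasurableSet.univ)
        (fun (q : ℝ × En n) => (fun ξ' => G t ξ' q.1 q.2)) (fun _ => ξ)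
        (hGmeas.comp (measurable_const.prodMk (measurable_snd.prodMk
          ((measurable_fst.comp measurable_fst).prodMk
            (measurable_snd.comp measurable_fst)))))
        measurable_const ?_
      · rwa [← hμPr] at h
      · rintro ⟨τ, η⟩ hq
        exact hGdiff t ξ τ η h0t (lt_of_le_of_lt hts hq.1.1) hq.1.2
    have jZ : AEStronglyMeasurable (fun τ : ℝ => ∫ ηb : En n,
        (fderiv ℝ (fun ξ' => G t ξ' τ ηb) ξ).smulRight (φ τ τ ηb ηb))
        (volume.restrict (Ioc s T)) := by
      have jH : AEMeasurable (fun q : ℝ × En n =>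
          (fderiv ℝ (fun ξ' => G t ξ' q.1 q.2) ξ).smulRight (φ q.1 q.1 q.2 q.2)) μP :=
        hsm.measurable.comp_aemeasurable (jfdG.prodMk jy.aemeasurable)
      exact jH.aestronglyMeasurable.integral_prod_right'
    have jZ1 : AEStronglyMeasurable (fun q : ℝ × En n => (∫ ηb : En n,
        (fderiv ℝ (fun ξ' => G t ξ' q.1 ηb) ξ).smulRight (φ q.1 q.1 ηb ηb))) μP :=
      jZ.comp_quasiMeasurePreserving Measure.quasiMeasurePreserving_fst
    have jz : AEMeasurable (fun q : ℝ × En n =>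
        (fderiv ℝ (fun y => φ t q.1 ξ y) q.2).comp (σ q.1 q.2)) μP :=
      hcomp.measurable.comp_aemeasurable (jfd.prodMk jσ.aemeasurable)
    have jζ : AEMeasurable (fun q : ℝ × En n =>
        ((∫ ηb : En n, (fderiv ℝ (fun ξ' => G t ξ' q.1 ηb) ξ).smulRight
          (φ q.1 q.1 ηb ηb)).comp (σ q.1 q.2))) μP :=
      hcomp.measurable.comp_aemeasurable (jZ1.aemeasurable.prodMk jσ.aemeasurable)
    have jg : AEMeasurable (fun q : ℝ × En n => g t q.1 ξ q.2 (φ q.1 q.1 q.2 q.2)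
        ((fderiv ℝ (fun y => φ t q.1 ξ y) q.2).comp (σ q.1 q.2))
        ((∫ ηb : En n, (fderiv ℝ (fun ξ' => G t ξ' q.1 ηb) ξ).smulRight
          (φ q.1 q.1 ηb ηb)).comp (σ q.1 q.2))) μP :=
      hgmeas.comp_aemeasurable (aemeasurable_const.prodMk
        (measurable_fst.aemeasurable.prodMk (aemeasurable_const.prodMk
          (measurable_snd.aemeasurable.prodMk (jy.aemeasurable.prodMk
            (jz.prodMk jζ))))))
    have jΦ : AEStronglyMeasurable (fun q : ℝ × En n =>
        G s x q.1 q.2 • g t q.1 ξ q.2 (φ q.1 q.1 q.2 q.2)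
          ((fderiv ℝ (fun y => φ t q.1 ξ y) q.2).comp (σ q.1 q.2))
          ((∫ ηb : En n, (fderiv ℝ (fun ξ' => G t ξ' q.1 ηb) ξ).smulRight
            (φ q.1 q.1 ηb ηb)).comp (σ q.1 q.2))) μP :=
      (jG.aemeasurable.smul jg).aestronglyMeasurable
    have hmeasOuter := jΦ.integral_prod_right'
    haveI : IsFiniteMeasure (volume.restrict (Ioc s T)) := by
      constructor
      rw [Measure.restrict_apply_univ]
      exact measure_Ioc_lt_top
    refine Integrable.mono'
      (integrable_const (K0 * (π / lam) ^ ((n : ℝ) / 2) * L)) hmeasOuter ?_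
    refine ae_restrict_of_forall_mem hIset fun τ hτ => ?_
    have hrs : 0 < τ - s := sub_pos.2 hτ.1
    have hb := norm_integral_le_of_norm_le
      (μ := (volume : Measure (En n)))
      (f := fun η : En n =>
        G s x τ η • g t τ ξ η (φ τ τ η η)
          ((fderiv ℝ (fun y => φ t τ ξ y) η).comp (σ τ η))
          ((∫ ηb : En n, (fderiv ℝ (fun ξ' => G t ξ' τ ηb) ξ).smulRight
            (φ τ τ ηb ηb)).comp (σ τ η)))
      (((gaussR_integrable lam (τ - s) hlam hrs x).const_mul
        (K0 * (τ - s) ^ (-(n : ℝ) / 2))).mul_const L)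
      (Eventually.of_forall fun η => by
        rw [norm_smul, Real.norm_eq_abs]
        exact mul_le_mul (hGbd s x τ η h0s hτ.1 hτ.2) (hgbd _ _ _ _ _ _ _)
          (norm_nonneg _) (by positivity))
    refine le_trans hb (le_of_eq ?_)
    rw [integral_mul_const, integral_const_mul, gaussR_integral lam (τ - s) hlam hrs x]
    have hc : (τ - s) ^ (-(n : ℝ) / 2) * (τ - s) ^ ((n : ℝ) / 2) = 1 := by
      rw [← Real.rpow_add hrs, show (-(n:ℝ)/2 + (n:ℝ)/2 : ℝ) = 0 by ring,
        Real.rpow_zero]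
    calc K0 * (τ - s) ^ (-(n : ℝ) / 2) *
          ((π / lam) ^ ((n : ℝ) / 2) * (τ - s) ^ ((n : ℝ) / 2)) * L
        = K0 * (π / lam) ^ ((n : ℝ) / 2) * L *
          ((τ - s) ^ (-(n : ℝ) / 2) * (τ - s) ^ ((n : ℝ) / 2)) := by ring
      _ = K0 * (π / lam) ^ ((n : ℝ) / 2) * L := by rw [hc, mul_one]


set_option maxHeartbeats 2000000 in
/-- Pointwise contraction-type estimate for the operator `S`. -/
theorem stmt_15 (n m d : ℕ) (hn : 1 ≤ n) (hm : 1 ≤ m) (hd : 1 ≤ d)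
    (T K0 lam L p : ℝ) (hT : 0 < T) (hK0 : 0 < K0) (hlam : 0 < lam) (hL : 0 < L)
    (hp : 1 < p) (hp2 : p < 2) :
    ∃ K : ℝ≥0,
      ∀ (G : ℝ → En n → ℝ → En n → ℝ)
        (g : ℝ → ℝ → En n → En n → En m → (En d →L[ℝ] En m) → (En d →L[ℝ] En m) → En m)
        (σ : ℝ → En n → (En d →L[ℝ] En n)),
        KernelHyp n T K0 lam G → GSHyp n m d L g σ →
        ∀ S : ℝ, 0 ≤ S → S < T →
        ∀ θ θh : ℝ → ℝ → En n → En n → En m,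
          memY n m S T p θ → memY n m S T p θh →
          ∀ t ∈ Icc (0:ℝ) T, ∀ s : ℝ, max t S ≤ s → s ≤ T → ∀ ξ x : En n,
            (‖Smap n m d T G g σ θ t s ξ x - Smap n m d T G g σ θh t s ξ x‖₊ : ℝ≥0∞)
              ≤ (K : ℝ≥0∞) *
                  (∫⁻ τ in Ioc s T,
                    ⨆ (ξ' : En n) (x' : En n),
                      (‖fderiv ℝ (fun y => θ t τ ξ' y) x'
                          - fderiv ℝ (fun y => θh t τ ξ' y) x'‖₊ : ℝ≥0∞))
                + (K : ℝ≥0∞) * ENNReal.ofReal ((T - s) ^ ((1:ℝ)/2)) *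
                    ⨆ (t' : Icc (0:ℝ) T) (τ : Icc (max t'.1 S) T) (ξ' : En n) (x' : En n),
                      (‖θ t'.1 τ.1 ξ' x' - θh t'.1 τ.1 ξ' x'‖₊ : ℝ≥0∞) := by
  classical
  have hπlam : 0 < π / lam := div_pos Real.pi_pos hlam
  obtain ⟨Cg, hCgdef⟩ : ∃ c : ℝ, c = K0 * (π / lam) ^ ((n : ℝ) / 2) := ⟨_, rfl⟩
  have hCg : 0 < Cg := by
    rw [hCgdef]; exact mul_pos hK0 (Real.rpow_pos_of_pos hπlam _)
  obtain ⟨KR, hKRdef⟩ : ∃ c : ℝ,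
      c = Cg * L * Real.sqrt T + 2 * Cg ^ 2 * L ^ 2 + Cg * L ^ 2 + 1 := ⟨_, rfl⟩
  have hsqT : 0 ≤ Real.sqrt T := Real.sqrt_nonneg T
  have hKR : 0 < KR := by
    rw [hKRdef]; positivity
  refine ⟨KR.toNNReal, ?_⟩
  intro G g σ hG hgs S hS0 hST θ θh hθY hθhY t ht s hsmax hsT ξ x
  have hKcoe : ((KR.toNNReal : ℝ≥0) : ℝ≥0∞) = ENNReal.ofReal KR := rfl
  have hKpos : (0 : ℝ≥0∞) < (KR.toNNReal : ℝ≥0∞) := by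
    rw [hKcoe]; exact ENNReal.ofReal_pos.2 hKR
  have hts : t ≤ s := le_trans (le_max_left t S) hsmax
  have hSs : S ≤ s := le_trans (le_max_right t S) hsmax
  have h0t : 0 ≤ t := ht.1
  have h0s : 0 ≤ s := le_trans h0t hts
  rcases eq_or_lt_of_le hsT with hEq | hlt
  · have hempty : Ioc s T = (∅ : Set ℝ) := by rw [hEq, Set.Ioc_self]
    have h1 : Smap n m d T G g σ θ t s ξ x = 0 := by
      simp only [Smap]
      rw [hempty, Measure.restrict_empty, integral_zero_measure]
    have h2 : Smap n m d T G g σ θh t s ξ x = 0 := by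
      simp only [Smap]
      rw [hempty, Measure.restrict_empty, integral_zero_measure]
    simp [h1, h2]
  obtain ⟨hGmeas, hGdiff, hGbd, hGgrad⟩ := id hG
  obtain ⟨hgmeas, hgbd, hglip, hσmeas, hσbd⟩ := id hgs
  obtain ⟨hθmeas, hθdiff, hθfin⟩ := id hθY
  obtain ⟨hθhmeas, hθhdiff, hθhfin⟩ := id hθhY
  -- uniform bounds on θ, θh
  have hsupθ : (⨆ (t' : Icc (0:ℝ) T) (s' : Icc (max t'.1 S) T) (ξ' : En n) (x' : En n),
      (‖θ t'.1 s'.1 ξ' x'‖₊ : ℝ≥0∞)) ≠ ⊤ := by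
    intro hcon
    exact hθfin (by simp only [Ynrm]; rw [hcon, add_top])
  have hsupθh : (⨆ (t' : Icc (0:ℝ) T) (s' : Icc (max t'.1 S) T) (ξ' : En n) (x' : En n),
      (‖θh t'.1 s'.1 ξ' x'‖₊ : ℝ≥0∞)) ≠ ⊤ := by
    intro hcon
    exact hθhfin (by simp only [Ynrm]; rw [hcon, add_top])
  have hBgen : ∀ (φ : ℝ → ℝ → En n → En n → En m),
      (⨆ (t' : Icc (0:ℝ) T) (s' : Icc (max t'.1 S) T) (ξ' : En n) (x' : En n),
        (‖φ t'.1 s'.1 ξ' x'‖₊ : ℝ≥0∞)) ≠ ⊤ →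
      ∀ τ ∈ Ioc s T, ∀ η : En n, ‖φ τ τ η η‖ ≤
        (⨆ (t' : Icc (0:ℝ) T) (s' : Icc (max t'.1 S) T) (ξ' : En n) (x' : En n),
          (‖φ t'.1 s'.1 ξ' x'‖₊ : ℝ≥0∞)).toReal := by
    intro φ hfin τ hτ η
    have hmem1 : τ ∈ Icc (0:ℝ) T := ⟨le_trans h0s hτ.1.le, hτ.2⟩
    have hle : (‖φ τ τ η η‖₊ : ℝ≥0∞) ≤
        ⨆ (t' : Icc (0:ℝ) T) (s' : Icc (max t'.1 S) T) (ξ' : En n) (x' : En n),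
          (‖φ t'.1 s'.1 ξ' x'‖₊ : ℝ≥0∞) := by
      refine le_iSup_of_le ⟨τ, hmem1⟩ ?_
      refine le_iSup_of_le ⟨τ, ⟨max_le le_rfl (le_trans hSs hτ.1.le), hτ.2⟩⟩ ?_
      exact le_iSup_of_le η (le_iSup_of_le η le_rfl)
    have h3 := ENNReal.toReal_mono hfin hle
    simpa using h3
  -- aux integrability facts
  obtain ⟨hZintθ, hinnerθ, houterθ⟩ := aux_int n m d hK0 hlam hL G g σ hG hgs ξ x
    h0t hts θ hθmeas
    (fun τ hτ x' => hθdiff t ht τ ⟨le_trans hsmax hτ.1.le, hτ.2⟩ ξ x')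
    _ (hBgen θ hsupθ)
  obtain ⟨hZintθh, hinnerθh, houterθh⟩ := aux_int n m d hK0 hlam hL G g σ hG hgs ξ x
    h0t hts θh hθhmeas
    (fun τ hτ x' => hθhdiff t ht τ ⟨le_trans hsmax hτ.1.le, hτ.2⟩ ξ x')
    _ (hBgen θh hsupθh)
  simp only [Smap]
  set Df : ℝ → ℝ≥0∞ := fun τ => ⨆ (ξ' : En n) (x' : En n),
    (‖fderiv ℝ (fun y => θ t τ ξ' y) x' - fderiv ℝ (fun y => θh t τ ξ' y) x'‖₊ : ℝ≥0∞)
    with hDfdef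
  set Δ : ℝ≥0∞ := ⨆ (t' : Icc (0:ℝ) T) (τ : Icc (max t'.1 S) T) (ξ' : En n) (x' : En n),
    (‖θ t'.1 τ.1 ξ' x' - θh t'.1 τ.1 ξ' x'‖₊ : ℝ≥0∞) with hΔdef
  by_cases hΔtop : Δ = ⊤
  · rw [hΔtop, ENNReal.mul_top (mul_ne_zero hKpos.ne' (by
      exact (ENNReal.ofReal_pos.2 (Real.rpow_pos_of_pos (sub_pos.2 hlt) _)).ne')),
      add_top]
    exact le_top
  by_cases hDtop : (∫⁻ τ in Ioc s T, Df τ) = ⊤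
  · rw [hDtop, ENNReal.mul_top hKpos.ne', top_add]
    exact le_top
  set δ : ℝ := Δ.toReal with hδdef
  have hδ0 : 0 ≤ δ := ENNReal.toReal_nonneg
  have hδgen : ∀ t' ∈ Icc (0:ℝ) T, ∀ τ', max t' S ≤ τ' → τ' ≤ T →
      ∀ (ξ' x' : En n), ‖θ t' τ' ξ' x' - θh t' τ' ξ' x'‖ ≤ δ := by
    intro t' ht' τ' h1 h2 ξ' x'
    have hle : (‖θ t' τ' ξ' x' - θh t' τ' ξ' x'‖₊ : ℝ≥0∞) ≤ Δ := by
      rw [hΔdef]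
      refine le_iSup_of_le ⟨t', ht'⟩ ?_
      refine le_iSup_of_le ⟨τ', ⟨h1, h2⟩⟩ ?_
      exact le_iSup_of_le ξ' (le_iSup_of_le x' le_rfl)
    have h3 := ENNReal.toReal_mono hΔtop hle
    simpa using h3
  have hδdiag : ∀ τ ∈ Ioc s T, ∀ η : En n, ‖θ τ τ η η - θh τ τ η η‖ ≤ δ := by
    intro τ hτ η
    exact hδgen τ ⟨le_trans h0s hτ.1.le, hτ.2⟩ τ
      (max_le le_rfl (le_trans hSs hτ.1.le)) hτ.2 η η
  -- Z difference bound
  have hZdiff : ∀ τ ∈ Ioc s T,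
      ‖(∫ ηb : En n, (fderiv ℝ (fun ξ' => G t ξ' τ ηb) ξ).smulRight (θ τ τ ηb ηb)) -
        (∫ ηb : En n, (fderiv ℝ (fun ξ' => G t ξ' τ ηb) ξ).smulRight (θh τ τ ηb ηb))‖
        ≤ Cg * δ * (τ - s) ^ (-(1:ℝ)/2) := by
    intro τ hτ
    have htτ : t < τ := lt_of_le_of_lt hts hτ.1
    have hrt : 0 < τ - t := by linarith
    have hrs : 0 < τ - s := sub_pos.2 hτ.1
    rw [← integral_sub (hZintθ τ hτ) (hZintθh τ hτ)]
    have hptw : ∀ ηb : En n,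
        ‖(fderiv ℝ (fun ξ' => G t ξ' τ ηb) ξ).smulRight (θ τ τ ηb ηb) -
          (fderiv ℝ (fun ξ' => G t ξ' τ ηb) ξ).smulRight (θh τ τ ηb ηb)‖
        ≤ K0 * (τ - t) ^ (-((n:ℝ)+1)/2) * Real.exp (-lam * ‖ηb - ξ‖^2 / (τ - t)) * δ := by
      intro ηb
      have hsub : (fderiv ℝ (fun ξ' => G t ξ' τ ηb) ξ).smulRight (θ τ τ ηb ηb) -
          (fderiv ℝ (fun ξ' => G t ξ' τ ηb) ξ).smulRight (θh τ τ ηb ηb)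
          = (fderiv ℝ (fun ξ' => G t ξ' τ ηb) ξ).smulRight
              (θ τ τ ηb ηb - θh τ τ ηb ηb) := by
        ext v; simp [smul_sub, mul_sub]
      rw [hsub, ContinuousLinearMap.norm_smulRight_apply]
      exact mul_le_mul (hGgrad t ξ τ ηb h0t htτ hτ.2) (hδdiag τ hτ ηb)
        (norm_nonneg _) (by positivity)
    refine le_trans (norm_integral_le_of_norm_le
      (((gaussR_integrable lam (τ - t) hlam hrt ξ).const_mul _).mul_const δ)
      (Eventually.of_forall hptw)) ?_
    rw [integral_mul_const, integral_const_mul, gaussR_integral lam (τ - t) hlam hrt ξ]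
    have hc : (τ - t) ^ (-((n:ℝ)+1)/2) * (τ - t) ^ ((n:ℝ)/2) = (τ - t) ^ (-(1:ℝ)/2) := by
      rw [← Real.rpow_add hrt, show -((n:ℝ)+1)/2 + (n:ℝ)/2 = -(1:ℝ)/2 by ring]
    have hmono : (τ - t) ^ (-(1:ℝ)/2) ≤ (τ - s) ^ (-(1:ℝ)/2) :=
      Real.rpow_le_rpow_of_nonpos hrs (by linarith) (by norm_num)
    calc K0 * (τ - t) ^ (-((n:ℝ)+1)/2) *
          ((π/lam) ^ ((n:ℝ)/2) * (τ - t) ^ ((n:ℝ)/2)) * δ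
        = (K0 * (π/lam) ^ ((n:ℝ)/2)) * δ *
            ((τ - t) ^ (-((n:ℝ)+1)/2) * (τ - t) ^ ((n:ℝ)/2)) := by ring
      _ = Cg * δ * (τ - t) ^ (-(1:ℝ)/2) := by rw [hc, ← hCgdef]
      _ ≤ Cg * δ * (τ - s) ^ (-(1:ℝ)/2) :=
          mul_le_mul_of_nonneg_left hmono (mul_nonneg hCg.le hδ0)
  -- pointwise bound on the inner integrals
  have hstep : ∀ τ ∈ Ioc s T,
      (‖(∫ η : En n, G s x τ η • g t τ ξ η (θ τ τ η η)
          ((fderiv ℝ (fun y => θ t τ ξ y) η).comp (σ τ η))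
          ((∫ ηb : En n, (fderiv ℝ (fun ξ' => G t ξ' τ ηb) ξ).smulRight
              (θ τ τ ηb ηb)).comp (σ τ η))) - (∫ η : En n, G s x τ η • g t τ ξ η (θh τ τ η η)
          ((fderiv ℝ (fun y => θh t τ ξ y) η).comp (σ τ η))
          ((∫ ηb : En n, (fderiv ℝ (fun ξ' => G t ξ' τ ηb) ξ).smulRight
              (θh τ τ ηb ηb)).comp (σ τ η)))‖₊ : ℝ≥0∞)
        ≤ ENNReal.ofReal (Cg * L * δ + Cg^2 * L^2 * δ * (τ - s) ^ (-(1:ℝ)/2))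
          + ENNReal.ofReal (Cg * L^2) * Df τ := by
    intro τ hτ
    have hrs : 0 < τ - s := sub_pos.2 hτ.1
    have hu0 : (0:ℝ) ≤ (τ - s) ^ (-(1:ℝ)/2) := Real.rpow_nonneg hrs.le _
    by_cases hDτ : Df τ = ⊤
    · rw [hDτ, ENNReal.mul_top (ENNReal.ofReal_pos.2 (by positivity)).ne',
        add_top]
      exact le_top
    have hdτ : ∀ (ξ' x' : En n),
        ‖fderiv ℝ (fun y => θ t τ ξ' y) x' - fderiv ℝ (fun y => θh t τ ξ' y) x'‖
          ≤ (Df τ).toReal := by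
      intro ξ' x'
      have hle : (‖fderiv ℝ (fun y => θ t τ ξ' y) x'
          - fderiv ℝ (fun y => θh t τ ξ' y) x'‖₊ : ℝ≥0∞) ≤ Df τ := by
        rw [hDfdef]
        exact le_iSup_of_le ξ' (le_iSup_of_le x' le_rfl)
      have h3 := ENNReal.toReal_mono hDτ hle
      simpa using h3
    have hd0 : 0 ≤ (Df τ).toReal := ENNReal.toReal_nonneg
    have hreal : ‖(∫ η : En n, G s x τ η • g t τ ξ η (θ τ τ η η)
          ((fderiv ℝ (fun y => θ t τ ξ y) η).comp (σ τ η))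
          ((∫ ηb : En n, (fderiv ℝ (fun ξ' => G t ξ' τ ηb) ξ).smulRight
              (θ τ τ ηb ηb)).comp (σ τ η))) - (∫ η : En n, G s x τ η • g t τ ξ η (θh τ τ η η)
          ((fderiv ℝ (fun y => θh t τ ξ y) η).comp (σ τ η))
          ((∫ ηb : En n, (fderiv ℝ (fun ξ' => G t ξ' τ ηb) ξ).smulRight
              (θh τ τ ηb ηb)).comp (σ τ η)))‖
        ≤ Cg * L * δ + Cg^2 * L^2 * δ * (τ - s) ^ (-(1:ℝ)/2)
          + Cg * L^2 * (Df τ).toReal := by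
      rw [← integral_sub (hinnerθ τ hτ) (hinnerθh τ hτ)]
      have hptw : ∀ η : En n, ‖(G s x τ η • g t τ ξ η (θ τ τ η η)
          ((fderiv ℝ (fun y => θ t τ ξ y) η).comp (σ τ η))
          ((∫ ηb : En n, (fderiv ℝ (fun ξ' => G t ξ' τ ηb) ξ).smulRight
              (θ τ τ ηb ηb)).comp (σ τ η))) - (G s x τ η • g t τ ξ η (θh τ τ η η)
          ((fderiv ℝ (fun y => θh t τ ξ y) η).comp (σ τ η))
          ((∫ ηb : En n, (fderiv ℝ (fun ξ' => G t ξ' τ ηb) ξ).smulRight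
              (θh τ τ ηb ηb)).comp (σ τ η)))‖
          ≤ K0 * (τ - s) ^ (-(n:ℝ)/2) * Real.exp (-lam * ‖η - x‖^2 / (τ - s)) *
            (L * ((δ + (Df τ).toReal * L) + Cg * δ * (τ - s) ^ (-(1:ℝ)/2) * L)) := by
        intro η
        rw [← smul_sub, norm_smul, Real.norm_eq_abs]
        refine mul_le_mul (hGbd s x τ η h0s hτ.1 hτ.2) ?_ (norm_nonneg _) (by positivity)
        refine le_trans (hglip t τ ξ η _ _ _ _ _ _) ?_
        refine mul_le_mul_of_nonneg_left ?_ hL.le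
        refine add_le_add (add_le_add (hδdiag τ hτ η) ?_) ?_
        · rw [← ContinuousLinearMap.sub_comp]
          refine le_trans (ContinuousLinearMap.opNorm_comp_le _ _) ?_
          exact mul_le_mul (hdτ ξ η) (hσbd τ η) (norm_nonneg _) hd0
        · rw [← ContinuousLinearMap.sub_comp]
          refine le_trans (ContinuousLinearMap.opNorm_comp_le _ _) ?_
          exact mul_le_mul (hZdiff τ hτ) (hσbd τ η) (norm_nonneg _)
            (by positivity)
      refine le_trans (norm_integral_le_of_norm_le
        (((gaussR_integrable lam (τ - s) hlam hrs x).const_mul _).mul_const _)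
        (Eventually.of_forall hptw)) ?_
      rw [integral_mul_const, integral_const_mul, gaussR_integral lam (τ - s) hlam hrs x]
      have hc : (τ - s) ^ (-(n:ℝ)/2) * (τ - s) ^ ((n:ℝ)/2) = 1 := by
        rw [← Real.rpow_add hrs, show -(n:ℝ)/2 + (n:ℝ)/2 = 0 by ring, Real.rpow_zero]
      refine le_of_eq ?_
      calc K0 * (τ - s) ^ (-(n:ℝ)/2) *
            ((π/lam) ^ ((n:ℝ)/2) * (τ - s) ^ ((n:ℝ)/2)) *
            (L * ((δ + (Df τ).toReal * L) + Cg * δ * (τ - s) ^ (-(1:ℝ)/2) * L))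
          = (K0 * (π/lam) ^ ((n:ℝ)/2)) *
              (L * ((δ + (Df τ).toReal * L) + Cg * δ * (τ - s) ^ (-(1:ℝ)/2) * L)) *
              ((τ - s) ^ (-(n:ℝ)/2) * (τ - s) ^ ((n:ℝ)/2)) := by ring
        _ = Cg * (L * ((δ + (Df τ).toReal * L) + Cg * δ * (τ - s) ^ (-(1:ℝ)/2) * L)) := by
            rw [hc, mul_one, ← hCgdef]
        _ = Cg * L * δ + Cg^2 * L^2 * δ * (τ - s) ^ (-(1:ℝ)/2)
            + Cg * L^2 * (Df τ).toReal := by ring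
    calc (‖(∫ η : En n, G s x τ η • g t τ ξ η (θ τ τ η η)
          ((fderiv ℝ (fun y => θ t τ ξ y) η).comp (σ τ η))
          ((∫ ηb : En n, (fderiv ℝ (fun ξ' => G t ξ' τ ηb) ξ).smulRight
              (θ τ τ ηb ηb)).comp (σ τ η))) - (∫ η : En n, G s x τ η • g t τ ξ η (θh τ τ η η)
          ((fderiv ℝ (fun y => θh t τ ξ y) η).comp (σ τ η))
          ((∫ ηb : En n, (fderiv ℝ (fun ξ' => G t ξ' τ ηb) ξ).smulRight
              (θh τ τ ηb ηb)).comp (σ τ η)))‖₊ : ℝ≥0∞)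
        = ENNReal.ofReal ‖(∫ η : En n, G s x τ η • g t τ ξ η (θ τ τ η η)
          ((fderiv ℝ (fun y => θ t τ ξ y) η).comp (σ τ η))
          ((∫ ηb : En n, (fderiv ℝ (fun ξ' => G t ξ' τ ηb) ξ).smulRight
              (θ τ τ ηb ηb)).comp (σ τ η))) - (∫ η : En n, G s x τ η • g t τ ξ η (θh τ τ η η)
          ((fderiv ℝ (fun y => θh t τ ξ y) η).comp (σ τ η))
          ((∫ ηb : En n, (fderiv ℝ (fun ξ' => G t ξ' τ ηb) ξ).smulRight
              (θh τ τ ηb ηb)).comp (σ τ η)))‖ :=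
          (ofReal_norm_eq_enorm _).symm
      _ ≤ ENNReal.ofReal (Cg * L * δ + Cg^2 * L^2 * δ * (τ - s) ^ (-(1:ℝ)/2)
            + Cg * L^2 * (Df τ).toReal) := ENNReal.ofReal_le_ofReal hreal
      _ = ENNReal.ofReal (Cg * L * δ + Cg^2 * L^2 * δ * (τ - s) ^ (-(1:ℝ)/2))
            + ENNReal.ofReal (Cg * L^2 * (Df τ).toReal) := by
          rw [ENNReal.ofReal_add (by positivity) (by positivity)]
      _ = ENNReal.ofReal (Cg * L * δ + Cg^2 * L^2 * δ * (τ - s) ^ (-(1:ℝ)/2))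
            + ENNReal.ofReal (Cg * L^2) * Df τ := by
          rw [ENNReal.ofReal_mul (by positivity), ENNReal.ofReal_toReal hDτ]
  -- main chain
  have hmain : (‖(∫ τ in Ioc s T, ∫ η : En n, G s x τ η • g t τ ξ η (θ τ τ η η)
          ((fderiv ℝ (fun y => θ t τ ξ y) η).comp (σ τ η))
          ((∫ ηb : En n, (fderiv ℝ (fun ξ' => G t ξ' τ ηb) ξ).smulRight
              (θ τ τ ηb ηb)).comp (σ τ η)))
        - (∫ τ in Ioc s T, ∫ η : En n, G s x τ η • g t τ ξ η (θh τ τ η η)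
          ((fderiv ℝ (fun y => θh t τ ξ y) η).comp (σ τ η))
          ((∫ ηb : En n, (fderiv ℝ (fun ξ' => G t ξ' τ ηb) ξ).smulRight
              (θh τ τ ηb ηb)).comp (σ τ η)))‖₊ : ℝ≥0∞)
      ≤ ∫⁻ τ in Ioc s T,
          (ENNReal.ofReal (Cg * L * δ + Cg^2 * L^2 * δ * (τ - s) ^ (-(1:ℝ)/2))
            + ENNReal.ofReal (Cg * L^2) * Df τ) := by
    rw [← integral_sub houterθ houterθh]
    refine le_trans (enorm_integral_le_lintegral_enorm _) ?_
    exact lintegral_mono_ae (ae_restrict_of_forall_mem measurableSet_Ioc hstep)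
  have hsplit : (∫⁻ τ in Ioc s T,
        (ENNReal.ofReal (Cg * L * δ + Cg^2 * L^2 * δ * (τ - s) ^ (-(1:ℝ)/2))
          + ENNReal.ofReal (Cg * L^2) * Df τ))
      = (∫⁻ τ in Ioc s T,
          ENNReal.ofReal (Cg * L * δ + Cg^2 * L^2 * δ * (τ - s) ^ (-(1:ℝ)/2)))
        + ENNReal.ofReal (Cg * L^2) * ∫⁻ τ in Ioc s T, Df τ := by
    rw [lintegral_add_left, lintegral_const_mul' _ _ ENNReal.ofReal_ne_top]
    refine Measurable.ennreal_ofReal ?_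
    exact measurable_const.add
      (((measurable_rpow_const' _ (by norm_num)).comp
        (measurable_id.sub measurable_const)).const_mul _)
  haveI : IsFiniteMeasure (volume.restrict (Ioc s T)) := by
    constructor
    rw [Measure.restrict_apply_univ]
    exact measure_Ioc_lt_top
  have hJint : IntegrableOn (fun τ : ℝ => (τ - s) ^ (-(1:ℝ)/2)) (Ioc s T) := by
    have h1 : IntervalIntegrable (fun y : ℝ => y ^ (-(1:ℝ)/2)) volume 0 (T - s) :=
      intervalIntegral.intervalIntegrable_rpow' (by norm_num)
    have h2 := h1.comp_sub_right s
    rw [zero_add, sub_add_cancel] at h2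
    exact (intervalIntegrable_iff_integrableOn_Ioc_of_le hsT).1 h2
  have hJval : ∫ τ in Ioc s T, (τ - s) ^ (-(1:ℝ)/2) = 2 * (T - s) ^ ((1:ℝ)/2) := by
    rw [← intervalIntegral.integral_of_le hsT,
      intervalIntegral.integral_comp_sub_right (fun y : ℝ => y ^ (-(1:ℝ)/2)) s,
      sub_self, integral_rpow (Or.inl (by norm_num)),
      Real.zero_rpow (by norm_num)]
    rw [show -(1:ℝ)/2 + 1 = (1:ℝ)/2 by norm_num]
    ring
  have hsub0 : (0:ℝ) ≤ T - s := by linarith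
  have ha0 : (0:ℝ) ≤ (T - s) ^ ((1:ℝ)/2) := Real.rpow_nonneg hsub0 _
  have hfirst : (∫⁻ τ in Ioc s T,
        ENNReal.ofReal (Cg * L * δ + Cg^2 * L^2 * δ * (τ - s) ^ (-(1:ℝ)/2)))
      ≤ ENNReal.ofReal (KR * (T - s) ^ ((1:ℝ)/2) * δ) := by
    have hint : Integrable (fun τ => Cg * L * δ + Cg^2 * L^2 * δ * (τ - s) ^ (-(1:ℝ)/2))
        (volume.restrict (Ioc s T)) :=
      (integrable_const _).add (hJint.const_mul _)
    have hnn : 0 ≤ᵐ[volume.restrict (Ioc s T)]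
        fun τ => Cg * L * δ + Cg^2 * L^2 * δ * (τ - s) ^ (-(1:ℝ)/2) := by
      refine ae_restrict_of_forall_mem measurableSet_Ioc fun τ hτ => ?_
      have : (0:ℝ) ≤ (τ - s) ^ (-(1:ℝ)/2) :=
        Real.rpow_nonneg (sub_pos.2 hτ.1).le _
      positivity
    rw [← ofReal_integral_eq_lintegral_ofReal hint hnn]
    apply ENNReal.ofReal_le_ofReal
    rw [integral_add (integrable_const _) (hJint.const_mul _), integral_const,
      integral_const_mul, hJval]
    rw [measureReal_restrict_apply_univ, Real.volume_real_Ioc_of_le hsT,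
      smul_eq_mul]
    set a : ℝ := (T - s) ^ ((1:ℝ)/2) with hadef
    have hhalf : T - s = a * a := by
      rw [hadef, ← Real.rpow_add' hsub0 (by norm_num)]
      norm_num
    have hsqle : a ≤ Real.sqrt T := by
      rw [hadef, Real.sqrt_eq_rpow]
      exact Real.rpow_le_rpow hsub0 (by linarith) (by norm_num)
    rw [hKRdef, hhalf]
    have h1 : a * a * (Cg * L * δ) ≤ Real.sqrt T * a * (Cg * L * δ) :=
      mul_le_mul_of_nonneg_right (mul_le_mul_of_nonneg_right hsqle ha0)
        (mul_nonneg (mul_nonneg hCg.le hL.le) hδ0)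
    nlinarith [h1, mul_nonneg (mul_nonneg ha0 hδ0)
        (mul_nonneg hCg.le (mul_nonneg hL.le hL.le)),
      mul_nonneg ha0 hδ0]
  have hDcoef : ENNReal.ofReal (Cg * L^2) ≤ (KR.toNNReal : ℝ≥0∞) := by
    rw [hKcoe]
    refine ENNReal.ofReal_le_ofReal ?_
    rw [hKRdef]
    nlinarith [mul_nonneg (mul_nonneg hCg.le hL.le) hsqT,
      mul_nonneg (mul_nonneg hCg.le hCg.le) (mul_nonneg hL.le hL.le)]
  have hsecond : ENNReal.ofReal (KR * (T - s) ^ ((1:ℝ)/2) * δ)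
      = (KR.toNNReal : ℝ≥0∞) * ENNReal.ofReal ((T - s) ^ ((1:ℝ)/2)) * Δ := by
    rw [ENNReal.ofReal_mul (mul_nonneg hKR.le ha0), ENNReal.ofReal_mul hKR.le,
      ← hKcoe, hδdef, ENNReal.ofReal_toReal hΔtop]
  calc (‖(∫ τ in Ioc s T, ∫ η : En n, G s x τ η • g t τ ξ η (θ τ τ η η)
          ((fderiv ℝ (fun y => θ t τ ξ y) η).comp (σ τ η))
          ((∫ ηb : En n, (fderiv ℝ (fun ξ' => G t ξ' τ ηb) ξ).smulRight
              (θ τ τ ηb ηb)).comp (σ τ η)))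
        - (∫ τ in Ioc s T, ∫ η : En n, G s x τ η • g t τ ξ η (θh τ τ η η)
          ((fderiv ℝ (fun y => θh t τ ξ y) η).comp (σ τ η))
          ((∫ ηb : En n, (fderiv ℝ (fun ξ' => G t ξ' τ ηb) ξ).smulRight
              (θh τ τ ηb ηb)).comp (σ τ η)))‖₊ : ℝ≥0∞)
      ≤ ∫⁻ τ in Ioc s T,
          (ENNReal.ofReal (Cg * L * δ + Cg^2 * L^2 * δ * (τ - s) ^ (-(1:ℝ)/2))
            + ENNReal.ofReal (Cg * L^2) * Df τ) := hmain
    _ = (∫⁻ τ in Ioc s T,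
          ENNReal.ofReal (Cg * L * δ + Cg^2 * L^2 * δ * (τ - s) ^ (-(1:ℝ)/2)))
        + ENNReal.ofReal (Cg * L^2) * ∫⁻ τ in Ioc s T, Df τ := hsplit
    _ ≤ ENNReal.ofReal (KR * (T - s) ^ ((1:ℝ)/2) * δ)
        + (KR.toNNReal : ℝ≥0∞) * ∫⁻ τ in Ioc s T, Df τ :=
          add_le_add hfirst (mul_le_mul_left hDcoef _)
    _ = (KR.toNNReal : ℝ≥0∞) * (∫⁻ τ in Ioc s T, Df τ)
        + (KR.toNNReal : ℝ≥0∞) * ENNReal.ofReal ((T - s) ^ ((1:ℝ)/2)) * Δ := by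
          rw [hsecond, add_comm]


end
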